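/- Let A be a separable unital C*-algebra and let 𝒯 be a weak*-closed convex set of tracial states on A that is separating, i.e., ∩_{τ ∈ 𝒯} I_τ = {0}. Then 𝒯 contains a faithful tracial state. -/

import Mathlib

open scoped ComplexOrder
open ComplexStarModule

section Aux

variable {A : Type*} [NormedRing A] [StarRing A] [CStarRing A]
    [NormedAlgebra ℂ A] [CompleteSpace A] [StarModule ℂ A]

private lemma aux_state_bound (τ : WeakDual ℂ A) (h1 : τ 1 = 1)
    (hp : ∀ a, 0 ≤ τ (star a * a)) (a : A) : ‖τ a‖ ≤ 2 * ‖a‖ := by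
  letI : CStarAlgebra A :=
    { ‹NormedRing A›, ‹StarRing A›, ‹CStarRing A›, ‹NormedAlgebra ℂ A›,
      ‹CompleteSpace A›, ‹StarModule ℂ A› with }
  letI : PartialOrder A := CStarAlgebra.spectralOrder A
  letI : StarOrderedRing A := CStarAlgebra.spectralOrderedRing A
  have hpos : ∀ x : A, 0 ≤ x → 0 ≤ τ x := by
    intro x hx
    have hs : CFC.sqrt x * CFC.sqrt x = x := CFC.sqrt_mul_sqrt_self x hx
    have h := hp (CFC.sqrt x)
    rwa [(IsSelfAdjoint.of_nonneg (CFC.sqrt_nonneg x)).star_eq, hs] at h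
  have halg : ∀ r : ℝ, τ (algebraMap ℝ A r) = (r : ℂ) := by
    intro r
    rw [Algebra.algebraMap_eq_smul_one, ← Complex.coe_smul, map_smul, h1]
    simp
  have hsa : ∀ b : A, IsSelfAdjoint b → ‖τ b‖ ≤ ‖b‖ := by
    intro b hb
    have h1' : 0 ≤ τ (algebraMap ℝ A ‖b‖ - b) :=
      hpos _ (by rw [sub_nonneg]; exact hb.le_algebraMap_norm_self)
    have h2' : 0 ≤ τ (b - (-(algebraMap ℝ A ‖b‖))) :=
      hpos _ (by rw [sub_nonneg]; exact hb.neg_algebraMap_norm_le_self)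
    rw [map_sub, halg] at h1'
    rw [map_sub, map_neg, halg] at h2'
    rw [Complex.nonneg_iff] at h1' h2'
    obtain ⟨hre1, him1⟩ := h1'
    obtain ⟨hre2, him2⟩ := h2'
    simp only [Complex.sub_re, Complex.sub_im, Complex.ofReal_re, Complex.ofReal_im,
      Complex.neg_re, Complex.neg_im, sub_nonneg, zero_sub, neg_eq_zero, neg_sub] at hre1 him1 hre2 him2
    have him : (τ b).im = 0 := by linarith [him1]
    have : τ b = ((τ b).re : ℂ) := by
      apply Complex.ext <;> simp [him]
    rw [this, Complex.norm_real, Real.norm_eq_abs, abs_le]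
    constructor <;> [linarith; linarith]
  calc ‖τ a‖ = ‖τ ((ℜ a : A) + Complex.I • (ℑ a : A))‖ := by
        rw [realPart_add_I_smul_imaginaryPart]
    _ ≤ ‖τ (ℜ a : A)‖ + ‖τ (Complex.I • (ℑ a : A))‖ := by
        rw [map_add]; exact norm_add_le _ _
    _ ≤ ‖(ℜ a : A)‖ + ‖(ℑ a : A)‖ := by
        rw [map_smul]
        refine add_le_add (hsa _ (ℜ a).2) ?_
        rw [norm_smul]
        simpa using hsa _ (ℑ a).2
    _ ≤ ‖a‖ + ‖a‖ := by
        have hre : ‖(ℜ a : A)‖ ≤ ‖a‖ := by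
          rw [realPart_apply_coe, norm_smul]
          calc ‖(2:ℝ)⁻¹‖ * ‖a + star a‖ ≤ 2⁻¹ * (‖a‖ + ‖star a‖) := by
                rw [Real.norm_eq_abs, abs_of_pos (by norm_num)]
                exact mul_le_mul_of_nonneg_left (norm_add_le _ _) (by norm_num)
            _ = ‖a‖ := by rw [norm_star]; ring
        have him : ‖(ℑ a : A)‖ ≤ ‖a‖ := by
          rw [imaginaryPart_apply_coe, norm_smul, norm_smul]
          calc ‖-Complex.I‖ * (‖(2:ℝ)⁻¹‖ * ‖a - star a‖) ≤ 1 * (2⁻¹ * (‖a‖ + ‖star a‖)) := by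
                rw [norm_neg, Complex.norm_I, Real.norm_eq_abs, abs_of_pos (by norm_num)]
                exact mul_le_mul_of_nonneg_left
                  (mul_le_mul_of_nonneg_left (norm_sub_le _ _) (by norm_num)) zero_le_one
            _ = ‖a‖ := by rw [norm_star]; ring
        exact add_le_add hre him
    _ = 2 * ‖a‖ := by ring

end Aux

open Filter Topology

set_option maxHeartbeats 1000000

/-- If `𝒯` is a weak*-closed convex set of tracial states on a separable unital C*-algebra
which is separating (i.e. `⋂_{τ ∈ 𝒯} I_τ = {0}`), then `𝒯` contains a faithful tracial
state. -/
theorem stmt_6 {A : Type*} [NormedRing A] [StarRing A] [CStarRing A]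
    [NormedAlgebra ℂ A] [CompleteSpace A] [StarModule ℂ A] [Nontrivial A]
    [TopologicalSpace.SeparableSpace A]
    (𝒯 : Set (WeakDual ℂ A))
    (h𝒯 : ∀ τ ∈ 𝒯, τ 1 = 1 ∧ (∀ a, 0 ≤ τ (star a * a)) ∧ ∀ a b, τ (a * b) = τ (b * a))
    (hclosed : IsClosed 𝒯)
    (hconv : ∀ τ₁ ∈ 𝒯, ∀ τ₂ ∈ 𝒯, ∀ c : ℝ, 0 ≤ c → c ≤ 1 →
      (c : ℂ) • τ₁ + ((1 - c : ℝ) : ℂ) • τ₂ ∈ 𝒯)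
    (hsep : ∀ a : A, (∀ τ ∈ 𝒯, τ (star a * a) = 0) → a = 0) :
    ∃ τ ∈ 𝒯, ∀ a : A, τ (star a * a) = 0 → a = 0 := by
  classical
  have hne : 𝒯.Nonempty := by
    rcases Set.eq_empty_or_nonempty 𝒯 with h | h
    · exfalso
      refine one_ne_zero (hsep 1 fun τ hτ => ?_)
      rw [h] at hτ; exact absurd hτ (Set.notMem_empty τ)
    · exact h
  have hbdd : ∀ σ ∈ 𝒯, ∀ a : A, ‖σ a‖ ≤ 2 * ‖a‖ := fun σ hσ =>
    aux_state_bound σ (h𝒯 σ hσ).1 (h𝒯 σ hσ).2.1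
  have hnorm : ∀ σ ∈ 𝒯, ‖WeakDual.toStrongDual σ‖ ≤ 2 :=
    fun σ hσ => ContinuousLinearMap.opNorm_le_bound _ (by norm_num) (hbdd σ hσ)
  have hcpt : IsCompact 𝒯 := by
    refine (WeakDual.isCompact_closedBall (𝕜 := ℂ) (E := A) 0 2).of_isClosed_subset
      hclosed (fun σ hσ => ?_)
    simp only [Set.mem_preimage, Metric.mem_closedBall, dist_zero_right]
    exact hnorm σ hσ
  haveI : CompactSpace ↥𝒯 := isCompact_iff_compactSpace.mp hcpt
  haveI : Nonempty ↥𝒯 := hne.to_subtype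
  -- separability of 𝒯 in the weak-* topology
  have hudense : DenseRange (TopologicalSpace.denseSeq A) :=
    TopologicalSpace.denseRange_denseSeq A
  set u : ℕ → A := TopologicalSpace.denseSeq A with hu
  have hf_cont : Continuous (fun σ : ↥𝒯 => fun n : ℕ => (σ : WeakDual ℂ A) (u n)) :=
    continuous_pi fun n => (WeakDual.eval_continuous (u n)).comp continuous_subtype_val
  have hf_inj : Function.Injective (fun σ : ↥𝒯 => fun n : ℕ => (σ : WeakDual ℂ A) (u n)) := by
    intro σ₁ σ₂ h
    apply Subtype.ext
    refine DFunLike.coe_injective ?_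
    refine Continuous.ext_on hudense (map_continuous (σ₁ : WeakDual ℂ A))
      (map_continuous (σ₂ : WeakDual ℂ A)) ?_
    rintro x ⟨n, rfl⟩
    exact congrFun h n
  haveI : SecondCountableTopology ↥𝒯 :=
    (hf_cont.isClosedEmbedding hf_inj).toIsEmbedding.secondCountableTopology
  set τs : ℕ → ↥𝒯 := TopologicalSpace.denseSeq ↥𝒯 with hτsdef
  have hτs : DenseRange τs := TopologicalSpace.denseRange_denseSeq ↥𝒯
  -- the series
  set c : ℕ → ℝ := fun n => (2⁻¹ : ℝ) ^ (n + 1) with hc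
  have hcpos : ∀ n, 0 < c n := fun n => pow_pos (by norm_num) _
  set g : ℕ → StrongDual ℂ A := fun n => WeakDual.toStrongDual (τs n : WeakDual ℂ A)
    with hgdef
  have hgnorm : ∀ n, ‖g n‖ ≤ 2 := fun n => hnorm _ (τs n).2
  have hsum : Summable (fun n => c n • g n) := by
    refine Summable.of_norm_bounded (g := fun n => (2⁻¹ : ℝ) ^ n)
      (summable_geometric_of_lt_one (by norm_num) (by norm_num)) (fun n => ?_)
    rw [norm_smul, Real.norm_eq_abs, abs_of_pos (hcpos n)]
    calc c n * ‖g n‖ ≤ c n * 2 := mul_le_mul_of_nonneg_left (hgnorm n) (hcpos n).le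
      _ = (2⁻¹ : ℝ) ^ n := by simp only [hc, pow_succ]; ring
  set F : StrongDual ℂ A := ∑' n, c n • g n with hF
  set τ' : WeakDual ℂ A := StrongDual.toWeakDual F with hτ'
  have happly : ∀ (G : StrongDual ℂ A) (a : A),
      (StrongDual.toWeakDual G) a = G a := fun _ _ => rfl
  have hsum_eval : ∀ a : A, Summable (fun n => c n • ((τs n : WeakDual ℂ A) a)) := by
    intro a
    have := hsum.map (ContinuousLinearMap.apply ℂ ℂ a) (ContinuousLinearMap.apply ℂ ℂ a).continuous
    simp only [Function.comp_def, ContinuousLinearMap.apply_apply, ContinuousLinearMap.smul_apply]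
      at this; exact this
  have hFa : ∀ a : A, τ' a = ∑' n, c n • ((τs n : WeakDual ℂ A) a) := by
    intro a
    have := (ContinuousLinearMap.apply ℂ ℂ a).map_tsum hsum
    simp only [ContinuousLinearMap.apply_apply, ContinuousLinearMap.smul_apply] at this; exact this
  -- convexity
  have hsmul : ∀ (r : ℝ) (σ : WeakDual ℂ A), (r : ℂ) • σ = r • σ := fun r σ => rfl
  have hconvex : Convex ℝ 𝒯 := by
    intro x hx y hy p q hp hq hpq
    have h := hconv x hx y hy p hp (by linarith)
    have hq' : q = 1 - p := by linarith
    rw [hq', ← hsmul p x, ← hsmul (1 - p) y]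
    exact h
  -- partial sums
  have hgeom : ∀ N, ∑ n ∈ Finset.range N, c n = 1 - (2⁻¹ : ℝ) ^ N := by
    intro N
    induction N with
    | zero => simp
    | succ N ih => rw [Finset.sum_range_succ, ih]; simp only [hc, pow_succ]; ring
  set s : ℕ → WeakDual ℂ A := fun N =>
    (∑ n ∈ Finset.range N, c n • (τs n : WeakDual ℂ A)) + (2⁻¹ : ℝ) ^ N • (τs N : WeakDual ℂ A)
    with hs
  have hsmem : ∀ N, s N ∈ 𝒯 := by
    intro N
    have key := hconvex.sum_mem (t := Finset.range (N + 1))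
      (w := fun n => if n < N then c n else (2⁻¹ : ℝ) ^ N)
      (z := fun n => if n < N then (τs n : WeakDual ℂ A) else (τs N : WeakDual ℂ A))
      (fun n _ => by split_ifs; exacts [(hcpos n).le, by positivity])
      (by
        rw [Finset.sum_range_succ, if_neg (lt_irrefl N)]
        rw [Finset.sum_congr rfl (fun n hn => if_pos (Finset.mem_range.mp hn)), hgeom]
        ring)
      (fun n _ => by split_ifs; exacts [(τs n).2, (τs N).2])
    have : (∑ n ∈ Finset.range (N + 1),
        (if n < N then c n else (2⁻¹ : ℝ) ^ N) •
          (if n < N then (τs n : WeakDual ℂ A) else (τs N : WeakDual ℂ A))) = s N := by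
      rw [Finset.sum_range_succ, if_neg (lt_irrefl N), if_neg (lt_irrefl N), hs]
      congr 1
      refine Finset.sum_congr rfl (fun n hn => ?_)
      rw [if_pos (Finset.mem_range.mp hn), if_pos (Finset.mem_range.mp hn)]
    rw [← this]; exact key
  -- convergence
  have htend : Tendsto s atTop (𝓝 τ') := by
    rw [tendsto_iff_forall_eval_tendsto_topDualPairing]
    intro a
    show Tendsto (fun N => (s N) a) atTop (𝓝 (τ' a))
    have h1 : Tendsto (fun N => ∑ n ∈ Finset.range N, c n • ((τs n : WeakDual ℂ A) a))
        atTop (𝓝 (τ' a)) := by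
      rw [hFa a]
      exact (hsum_eval a).hasSum.tendsto_sum_nat
    have h2 : Tendsto (fun N => ((2⁻¹ : ℝ) ^ N : ℝ) • ((τs N : WeakDual ℂ A) a))
        atTop (𝓝 0) := by
      have hz : Tendsto (fun N : ℕ => (2⁻¹ : ℝ) ^ N * (2 * ‖a‖)) atTop (𝓝 0) := by
        simpa using (tendsto_pow_atTop_nhds_zero_of_lt_one (r := (2⁻¹ : ℝ))
          (by norm_num) (by norm_num)).mul_const (2 * ‖a‖)
      refine squeeze_zero_norm (fun N => ?_) hz
      rw [norm_smul, Real.norm_eq_abs, abs_of_pos (by positivity)]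
      exact mul_le_mul_of_nonneg_left (hbdd _ (τs N).2 a) (by positivity)
    have h3 := h1.add h2
    rw [add_zero] at h3
    convert h3 using 2 with N
    show (s N) a = _
    rw [hs]
    show (∑ n ∈ Finset.range N, c n • (τs n : WeakDual ℂ A)) a
        + ((2⁻¹ : ℝ) ^ N • (τs N : WeakDual ℂ A)) a = _
    congr 1
    · let ev : WeakDual ℂ A →+ ℂ :=
        { toFun := fun σ => σ a, map_zero' := rfl, map_add' := fun _ _ => rfl }
      exact map_sum ev _ _
  have hτ'mem : τ' ∈ 𝒯 := hclosed.mem_of_tendsto htend (Filter.Eventually.of_forall hsmem)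
  refine ⟨τ', hτ'mem, fun a ha => hsep a ?_⟩
  -- each τs n kills star a * a
  have hterm : ∀ n, (τs n : WeakDual ℂ A) (star a * a) = 0 := by
    set φ : ℕ → ℂ := fun n => (τs n : WeakDual ℂ A) (star a * a) with hφ
    have hφpos : ∀ n, 0 ≤ φ n := fun n => (h𝒯 _ (τs n).2).2.1 a
    have hsφ : Summable (fun n => c n • φ n) := hsum_eval _
    have h0 : ∑' n, c n • φ n = 0 := by rw [← hFa]; exact ha
    have hsre : Summable (fun n => c n * (φ n).re) := by
      have := hsφ.map Complex.reCLM Complex.reCLM.continuous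
      simpa only [Function.comp_def, Complex.reCLM_apply, Complex.smul_re, smul_eq_mul] using this
    have h0re : ∑' n, c n * (φ n).re = 0 := by
      have := congrArg Complex.re h0
      rw [Complex.re_tsum hsφ] at this
      simpa only [Complex.smul_re, Complex.zero_re, smul_eq_mul] using this
    intro n
    have hnn : ∀ m, 0 ≤ c m * (φ m).re :=
      fun m => mul_nonneg (hcpos m).le (Complex.nonneg_iff.mp (hφpos m)).1
    have hle : c n * (φ n).re ≤ 0 := h0re ▸ Summable.le_tsum hsre n (fun m _ => hnn m)
    have hre0 : (φ n).re = 0 := by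
      have h1 := hnn n
      nlinarith [hcpos n]
    have him0 : (φ n).im = 0 := (Complex.nonneg_iff.mp (hφpos n)).2.symm
    exact Complex.ext hre0 him0
  -- propagate to all of 𝒯 by density
  intro σ hσ
  have hZ : IsClosed {ρ : WeakDual ℂ A | ρ (star a * a) = 0} :=
    isClosed_eq (WeakDual.eval_continuous _) continuous_const
  have hsub : Set.range (fun n => (τs n : WeakDual ℂ A)) ⊆
      {ρ : WeakDual ℂ A | ρ (star a * a) = 0} := by
    rintro _ ⟨n, rfl⟩; exact hterm n
  have hmem : σ ∈ closure (Set.range (fun n => (τs n : WeakDual ℂ A))) := by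
    have h1 : (⟨σ, hσ⟩ : ↥𝒯) ∈ closure (Set.range τs) := hτs _
    have h2 : σ ∈ Subtype.val '' closure (Set.range τs) := ⟨⟨σ, hσ⟩, h1, rfl⟩
    have h3 := (image_closure_subset_closure_image continuous_subtype_val) h2
    rwa [← Set.range_comp] at h3
  exact (closure_minimal hsub hZ) hmem
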